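/- Let P be a monic polynomial of degree n with all zeros on the unit circle such that |P'(z)| = n for all z with |z| ≥ 1 (in the sense that f(z) = P'(z)/z^{n-1} has constant modulus n on and outside the unit circle). Then P(z) = z^n - c for some c with |c| = 1; i.e., the zeros of P are n equally spaced points on the unit circle. -/

import Mathlib

open Complex

open Polynomial in
/-- If `P` is monic with all zeros on the unit circle and `|P'(z)/z^{n-1}| = n` for all
`|z| ≥ 1`, then `P(z) = z^n - c` with `|c| = 1`. -/
theorem eq_zpow_sub_const (n : ℕ) (hn : 1 ≤ n) (t : Fin n → ℝ) (P : ℂ → ℂ)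
    (hP : P = fun z => ∏ j, (z - Complex.exp (t j * Complex.I)))
    (hf : ∀ z : ℂ, 1 ≤ ‖z‖ → ‖deriv P z / z ^ (n - 1)‖ = n) :
    ∃ c : ℂ, ‖c‖ = 1 ∧ ∀ z : ℂ, P z = z ^ n - c := by
  set p : ℂ[X] := ∏ j : Fin n, (X - C (Complex.exp (t j * Complex.I))) with hp
  have hPe : P = fun z => p.eval z := by
    rw [hP]; funext z; simp [hp, eval_prod]
  have hmonic : p.Monic := monic_prod_of_monic _ _ fun j _ => monic_X_sub_C _
  have hdeg : p.natDegree = n := by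
    rw [hp, natDegree_prod _ _ fun j _ => X_sub_C_ne_zero _]
    simp
  set q := derivative p with hq
  have hdq : q.natDegree = n - 1 := by
    have h := degree_derivative_eq p (by omega)
    rw [hdeg] at h
    exact natDegree_eq_of_degree_eq_some h
  have hqtop : q.coeff (n - 1) = n := by
    have h1 := coeff_derivative p (n - 1)
    have h2 : p.coeff n = 1 := hdeg ▸ hmonic.coeff_natDegree
    rw [Nat.sub_add_cancel hn, h2, one_mul] at h1
    have h3 : ((n - 1 : ℕ) : ℂ) + 1 = n := by
      norm_cast
      omega
    exact h1.trans h3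
  have hderiv : ∀ z : ℂ, deriv P z = q.eval z := by
    intro z; rw [hPe]; exact Polynomial.deriv p
  -- |q z| = n |z|^(n-1) for |z| ≥ 1
  have habs : ∀ z : ℂ, 1 ≤ ‖z‖ →
      ‖q.eval z‖ = n * ‖z‖ ^ (n - 1) := by
    intro z hz
    have hz0 : z ≠ 0 := by
      intro h; rw [h, norm_zero] at hz; linarith
    have h := hf z hz
    rw [hderiv, norm_div, norm_pow] at h
    have hzp : ‖z‖ ^ (n - 1) ≠ 0 :=
      pow_ne_zero _ (norm_ne_zero_iff.mpr hz0)
    exact (div_eq_iff hzp).mp h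
  -- the reversed polynomial
  have hrev : ∀ w : ℂ, w ≠ 0 → (reverse q).eval w = q.eval w⁻¹ * w ^ (n - 1) := by
    intro w hw
    have hwi : w⁻¹ ≠ 0 := inv_ne_zero hw
    letI : Invertible (w⁻¹) := invertibleOfNonzero hwi
    have h2 : (reverse q).eval w * w⁻¹ ^ (n - 1) = q.eval w⁻¹ := by
      have h := eval₂_reverse_mul_pow (RingHom.id ℂ) (w⁻¹) q
      rwa [invOf_eq_inv, inv_inv, hdq] at h
    calc (reverse q).eval w
        = (reverse q).eval w * w⁻¹ ^ (n - 1) * w ^ (n - 1) := by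
          rw [mul_assoc, ← mul_pow, inv_mul_cancel₀ hw, one_pow, mul_one]
      _ = q.eval w⁻¹ * w ^ (n - 1) := by rw [h2]
  have hrevabs : ∀ w : ℂ, w ≠ 0 → ‖w‖ ≤ 1 →
      ‖(reverse q).eval w‖ = n := by
    intro w hw hw1
    have hwpos : 0 < ‖w‖ := norm_pos_iff.mpr hw
    have hwi : (1 : ℝ) ≤ ‖w⁻¹‖ := by
      rw [norm_inv, one_le_inv_iff₀]
      exact ⟨hwpos, hw1⟩
    rw [hrev w hw, norm_mul, habs _ hwi, norm_pow, norm_inv, inv_pow,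
      mul_assoc, inv_mul_cancel₀ (pow_ne_zero _ (ne_of_gt hwpos)), mul_one]
  -- value at 0
  have hrev0 : (reverse q).eval 0 = n := by
    rw [← coeff_zero_eq_eval_zero, coeff_zero_reverse, leadingCoeff, hdq, hqtop]
  -- maximum modulus: reverse q is constant n on the unit ball
  have hconst : ∀ w ∈ Metric.ball (0 : ℂ) 1, (reverse q).eval w = n := by
    have hmax : IsMaxOn (norm ∘ fun w => (reverse q).eval w) (Metric.ball (0 : ℂ) 1) 0 := by
      intro w hw
      simp only [Function.comp_apply, Set.mem_setOf_eq, hrev0]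
      rcases eq_or_ne w 0 with rfl | hw0
      · rw [hrev0]
      · rw [mem_ball_zero_iff] at hw
        have h := hrevabs w hw0 (le_of_lt hw)
        simp only [h, Complex.norm_natCast, le_refl]
    have heq := Complex.eqOn_of_isPreconnected_of_isMaxOn_norm
      (convex_ball (0:ℂ) 1).isPreconnected Metric.isOpen_ball
      ((reverse q).differentiable.differentiableOn) (Metric.mem_ball_self one_pos) hmax
    intro w hw
    have h := heq hw
    simpa [Function.const, hrev0] using h
  -- hence reverse q = C n as polynomials
  have hrevC : reverse q = C (n : ℂ) := by
    have hroot : (reverse q - C (n : ℂ)) = 0 := by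
      apply eq_zero_of_infinite_isRoot
      apply Set.infinite_of_injective_forall_mem
        (f := fun k : ℕ => ((1 / (k + 2) : ℝ) : ℂ))
      · intro a b hab
        have hab' : ((1 / (a + 2) : ℝ) : ℂ) = ((1 / (b + 2) : ℝ) : ℂ) := hab
        rw [Complex.ofReal_inj] at hab'
        field_simp at hab'
        exact Nat.add_right_cancel (by exact_mod_cast hab'.symm)
      · intro k
        simp only [Set.mem_setOf_eq, IsRoot, eval_sub, eval_C]
        rw [hconst _ (by
          rw [mem_ball_zero_iff, Complex.norm_real, Real.norm_eq_abs,
            abs_of_pos (by positivity), div_lt_one (by positivity)]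
          have hk0 : (0:ℝ) ≤ (k:ℝ) := Nat.cast_nonneg k
          linarith)]
        ring
    linear_combination (norm := ring_nf) hroot
  -- hence q = n X^(n-1)
  have hqX : q = C (n : ℂ) * X ^ (n - 1) := by
    ext k
    rcases le_or_gt k (n - 1) with hk | hk
    · have hrk : q.coeff k = (reverse q).coeff (n - 1 - k) := by
        rw [coeff_reverse, hdq, revAt_le (Nat.sub_le _ _), Nat.sub_sub_self hk]
      rw [hrk, hrevC, coeff_C, coeff_C_mul, coeff_X_pow]
      rcases eq_or_lt_of_le hk with rfl | hk'
      · simp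
      · rw [if_neg (by omega), if_neg (by omega), mul_zero]
    · rw [coeff_eq_zero_of_natDegree_lt (by rw [hdq]; omega),
        coeff_C_mul, coeff_X_pow, if_neg (by omega), mul_zero]
  -- deriv P z = n z^(n-1) everywhere
  have hdP : ∀ z : ℂ, deriv P z = n * z ^ (n - 1) := by
    intro z; rw [hderiv, hqX]; simp
  -- P z - z^n is constant
  have hdiffP : Differentiable ℂ P := by rw [hPe]; exact p.differentiable
  have hg : ∀ z : ℂ, P z - z ^ n = P 0 - 0 ^ n := by
    intro z
    apply is_const_of_deriv_eq_zero (f := fun z : ℂ => P z - z ^ n)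
    · exact hdiffP.sub (differentiable_pow n)
    · intro x
      rw [deriv_fun_sub (hdiffP x) (differentiable_pow n x), hdP, deriv_pow_field]
      ring
  refine ⟨-P 0, ?_, ?_⟩
  · rw [norm_neg, hP]
    simp only
    rw [norm_prod, Finset.prod_eq_one]
    intro j _
    rw [zero_sub, norm_neg, Complex.norm_exp_ofReal_mul_I]
  · intro z
    have h := hg z
    rw [zero_pow (by omega)] at h
    linear_combination h
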